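/- arXiv:1205.4930 — 5 statements merged into one kernel-verified Lean document; each statement's English description precedes it below -/
import Mathlib

section
/- Let Δ(t) = (sinh t)^{n₁}(sinh 2t)^{n₂}, ρ = (n₁+2n₂)/2, and let φ : [0,∞) → ℝ be continuous with φ(t)·e^{(ρ−s)t} → c(s) > 0 as t → ∞, where 0 < s < ρ. Then ψ(t) = (∫₀ᵗ φ(τ)Δ(τ)dτ)/(∫₀ᵗ Δ(τ)dτ) satisfies ψ(t)·e^{(ρ−s)t} → c' for some constant c' > 0 as t → ∞. -/
open MeasureTheory Real Filter Topology

lemma exp_int_aux (a : ℝ) (ha : a ≠ 0) (T t : ℝ) :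
    ∫ τ in T..t, Real.exp (a * τ) = (Real.exp (a * t) - Real.exp (a * T)) / a := by
  have h : ∀ x ∈ Set.uIcc T t,
      HasDerivAt (fun y => Real.exp (a * y) / a) (Real.exp (a * x)) x := by
    intro x _
    have h1 : HasDerivAt (fun y : ℝ => Real.exp (a * y)) (Real.exp (a * x) * a) x := by
      simpa using ((hasDerivAt_id' x).const_mul a).exp
    have := h1.div_const a
    simpa [mul_div_assoc, mul_div_cancel_right₀ _ ha] using this
  rw [intervalIntegral.integral_eq_sub_of_hasDerivAt h
    ((Real.continuous_exp.comp (continuous_const.mul continuous_id)).intervalIntegrable _ _)]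
  ring

lemma key_lemma (f : ℝ → ℝ) (hf : Continuous f) (a L : ℝ) (ha : 0 < a)
    (h : Tendsto (fun t => f t * Real.exp (-(a * t))) atTop (𝓝 L)) :
    Tendsto (fun t => (∫ τ in (0:ℝ)..t, f τ) * Real.exp (-(a * t))) atTop (𝓝 (L / a)) := by
  rw [Metric.tendsto_atTop]
  intro ε hε
  obtain ⟨T, hT⟩ := Metric.tendsto_atTop.1 h (a * ε / 2) (by positivity)
  set F : ℝ → ℝ := fun t => ∫ τ in (0:ℝ)..t, f τ with hF
  set C : ℝ := |F T - L / a * Real.exp (a * T)| with hCdef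
  have h0 : Tendsto (fun t : ℝ => C * Real.exp (-(a * t))) atTop (𝓝 0) := by
    have h1 : Tendsto (fun t : ℝ => Real.exp (-(a * t))) atTop (𝓝 0) :=
      Real.tendsto_exp_neg_atTop_nhds_zero.comp (tendsto_id.const_mul_atTop ha)
    simpa using h1.const_mul C
  obtain ⟨N₂, hN₂⟩ := Metric.tendsto_atTop.1 h0 (ε / 2) (by positivity)
  refine ⟨max T N₂, fun t ht => ?_⟩
  have htT : T ≤ t := le_trans (le_max_left _ _) ht
  have htN : N₂ ≤ t := le_trans (le_max_right _ _) ht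
  have hee : Real.exp (a * t) * Real.exp (-(a * t)) = 1 := by
    rw [← Real.exp_add]; simp
  have hsplit : F t = F T + ∫ τ in T..t, f τ := by
    rw [hF]
    simp only
    rw [← intervalIntegral.integral_add_adjacent_intervals
      (hf.intervalIntegrable 0 T) (hf.intervalIntegrable T t)]
  have hcont2 : Continuous (fun τ : ℝ => L * Real.exp (a * τ)) :=
    continuous_const.mul (Real.continuous_exp.comp (continuous_const.mul continuous_id))
  have hsub : (∫ τ in T..t, (f τ - L * Real.exp (a * τ)))
      = (∫ τ in T..t, f τ) - L / a * (Real.exp (a * t) - Real.exp (a * T)) := by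
    rw [intervalIntegral.integral_sub (hf.intervalIntegrable T t)
      (hcont2.intervalIntegrable T t), intervalIntegral.integral_const_mul,
      exp_int_aux a ha.ne' T t]
    ring
  have hkey : F t * Real.exp (-(a * t)) - L / a
      = (F T - L / a * Real.exp (a * T)) * Real.exp (-(a * t))
        + (∫ τ in T..t, (f τ - L * Real.exp (a * τ))) * Real.exp (-(a * t)) := by
    rw [hsub, hsplit]
    linear_combination (L / a) * hee
  have hb2 : |(∫ τ in T..t, (f τ - L * Real.exp (a * τ)))|
      ≤ ε / 2 * (Real.exp (a * t) - Real.exp (a * T)) := by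
    calc |(∫ τ in T..t, (f τ - L * Real.exp (a * τ)))|
        ≤ ∫ τ in T..t, |f τ - L * Real.exp (a * τ)| :=
          intervalIntegral.abs_integral_le_integral_abs htT
      _ ≤ ∫ τ in T..t, a * ε / 2 * Real.exp (a * τ) := by
          apply intervalIntegral.integral_mono_on htT
            ((hf.sub hcont2).abs.intervalIntegrable T t)
            ((continuous_const.mul
              (Real.continuous_exp.comp (continuous_const.mul continuous_id))).intervalIntegrable T t)
          intro x hx
          have hd := hT x hx.1
          rw [Real.dist_eq] at hd
          have hrw : f x - L * Real.exp (a * x)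
              = (f x * Real.exp (-(a * x)) - L) * Real.exp (a * x) := by
            rw [sub_mul, mul_assoc, ← Real.exp_add]
            simp
          show |f x - L * Real.exp (a * x)| ≤ a * ε / 2 * Real.exp (a * x)
          rw [hrw, abs_mul, abs_of_pos (Real.exp_pos _)]
          exact mul_le_mul_of_nonneg_right hd.le (Real.exp_pos _).le
      _ = ε / 2 * (Real.exp (a * t) - Real.exp (a * T)) := by
          rw [intervalIntegral.integral_const_mul, exp_int_aux a ha.ne' T t]
          field_simp
  have e1 : C * Real.exp (-(a * t)) < ε / 2 := by
    have := hN₂ t htN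
    rw [Real.dist_eq, sub_zero] at this
    exact (le_abs_self _).trans_lt this
  have e2 : |(∫ τ in T..t, (f τ - L * Real.exp (a * τ)))| * Real.exp (-(a * t)) ≤ ε / 2 := by
    have h2 := mul_le_mul_of_nonneg_right hb2 (Real.exp_pos (-(a * t))).le
    nlinarith [Real.exp_pos (a * T), Real.exp_pos (-(a * t)),
      mul_pos (Real.exp_pos (a * T)) (Real.exp_pos (-(a * t))), hε.le]
  rw [Real.dist_eq]
  calc |F t * Real.exp (-(a * t)) - L / a|
      = |(F T - L / a * Real.exp (a * T)) * Real.exp (-(a * t))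
          + (∫ τ in T..t, (f τ - L * Real.exp (a * τ))) * Real.exp (-(a * t))| := by rw [hkey]
    _ ≤ |(F T - L / a * Real.exp (a * T)) * Real.exp (-(a * t))|
          + |(∫ τ in T..t, (f τ - L * Real.exp (a * τ))) * Real.exp (-(a * t))| := abs_add_le _ _
    _ = C * Real.exp (-(a * t))
          + |(∫ τ in T..t, (f τ - L * Real.exp (a * τ)))| * Real.exp (-(a * t)) := by
          rw [abs_mul, abs_mul, abs_of_pos (Real.exp_pos _)]
    _ < ε := by linarith

lemma sinh_exp_lim : Tendsto (fun t : ℝ => Real.sinh t * Real.exp (-t)) atTop (𝓝 (1 / 2)) := by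
  have heq : ∀ t : ℝ, Real.sinh t * Real.exp (-t) = (1 - Real.exp (-(2 * t))) / 2 := by
    intro t
    rw [Real.sinh_eq, div_mul_eq_mul_div, sub_mul, ← Real.exp_add, ← Real.exp_add]
    norm_num
    ring_nf
  have h1 : Tendsto (fun t : ℝ => (1 - Real.exp (-(2 * t))) / 2) atTop (𝓝 ((1 - 0) / 2)) := by
    exact (tendsto_const_nhds.sub
      (Real.tendsto_exp_neg_atTop_nhds_zero.comp (tendsto_id.const_mul_atTop two_pos))).div_const 2
  simpa [heq] using h1

lemma delta_lim (n₁ n₂ : ℕ) :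
    Tendsto (fun t : ℝ =>
        (Real.sinh t ^ n₁ * Real.sinh (2 * t) ^ n₂) * Real.exp (-((((n₁ : ℝ) + 2 * n₂)) * t)))
      atTop (𝓝 ((1 / 2 : ℝ) ^ n₁ * (1 / 2 : ℝ) ^ n₂)) := by
  have h1 : Tendsto (fun t : ℝ => (Real.sinh t * Real.exp (-t)) ^ n₁) atTop
      (𝓝 ((1 / 2 : ℝ) ^ n₁)) := sinh_exp_lim.pow n₁
  have h2 : Tendsto (fun t : ℝ => (Real.sinh (2 * t) * Real.exp (-(2 * t))) ^ n₂) atTop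
      (𝓝 ((1 / 2 : ℝ) ^ n₂)) := by
    have := sinh_exp_lim.comp (tendsto_id.const_mul_atTop (two_pos : (0:ℝ) < 2))
    exact this.pow n₂
  refine (h1.mul h2).congr fun t => ?_
  rw [mul_pow, mul_pow]
  have e1 : Real.exp (-t) ^ n₁ = Real.exp (-((n₁ : ℝ) * t)) := by
    rw [← Real.exp_nat_mul]; ring_nf
  have e2 : Real.exp (-(2 * t)) ^ n₂ = Real.exp (-((2 * n₂ : ℝ) * t)) := by
    rw [← Real.exp_nat_mul]; ring_nf
  rw [e1, e2]
  rw [show (Real.sinh t ^ n₁ * Real.exp (-((n₁ : ℝ) * t))) *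
      (Real.sinh (2 * t) ^ n₂ * Real.exp (-((2 * n₂ : ℝ) * t)))
      = (Real.sinh t ^ n₁ * Real.sinh (2 * t) ^ n₂) *
        (Real.exp (-((n₁ : ℝ) * t)) * Real.exp (-((2 * n₂ : ℝ) * t))) by ring]
  rw [← Real.exp_add]
  congr 2
  ring

theorem psi_asymptotic (n₁ n₂ : ℕ) (hn : 0 < n₁ + n₂) (s c : ℝ) (hs : 0 < s)
    (hsρ : s < ((n₁ : ℝ) + 2 * n₂) / 2) (hc : 0 < c) (φ : ℝ → ℝ)
    (hφ : Continuous φ)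
    (hlim : Tendsto (fun t : ℝ => φ t * Real.exp ((((n₁ : ℝ) + 2 * n₂) / 2 - s) * t))
      atTop (𝓝 c)) :
    ∃ c' : ℝ, 0 < c' ∧
      Tendsto (fun t : ℝ =>
          ((∫ τ in (0:ℝ)..t, φ τ * ((Real.sinh τ) ^ n₁ * (Real.sinh (2 * τ)) ^ n₂)) /
            (∫ τ in (0:ℝ)..t, (Real.sinh τ) ^ n₁ * (Real.sinh (2 * τ)) ^ n₂)) *
          Real.exp ((((n₁ : ℝ) + 2 * n₂) / 2 - s) * t))
        atTop (𝓝 c') := by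
  set ρ2 : ℝ := (n₁ : ℝ) + 2 * n₂ with hρ2
  have hρ2pos : 0 < ρ2 := by linarith
  set K : ℝ := (1 / 2 : ℝ) ^ n₁ * (1 / 2 : ℝ) ^ n₂ with hK
  have hKpos : 0 < K := by positivity
  set a₁ : ℝ := ρ2 / 2 + s with ha₁
  have ha₁pos : 0 < a₁ := by positivity
  have hΔcont : Continuous (fun τ : ℝ => Real.sinh τ ^ n₁ * Real.sinh (2 * τ) ^ n₂) :=
    (Real.continuous_sinh.pow n₁).mul
      ((Real.continuous_sinh.comp (continuous_const.mul continuous_id)).pow n₂)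
  -- numerator asymptotic for the integrand
  have hnum_ptwise : Tendsto (fun t : ℝ =>
      (φ t * (Real.sinh t ^ n₁ * Real.sinh (2 * t) ^ n₂)) * Real.exp (-(a₁ * t)))
      atTop (𝓝 (c * K)) := by
    have := hlim.mul (delta_lim n₁ n₂)
    refine this.congr fun t => ?_
    rw [mul_mul_mul_comm, ← Real.exp_add]
    congr 2
    rw [ha₁, hρ2]
    ring
  have hnum := key_lemma _ (hφ.mul hΔcont) a₁ (c * K) ha₁pos hnum_ptwise
  have hden_ptwise : Tendsto (fun t : ℝ =>
      (Real.sinh t ^ n₁ * Real.sinh (2 * t) ^ n₂) * Real.exp (-(ρ2 * t)))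
      atTop (𝓝 K) := delta_lim n₁ n₂
  have hden := key_lemma _ hΔcont ρ2 K hρ2pos hden_ptwise
  refine ⟨(c * K / a₁) / (K / ρ2), by positivity, ?_⟩
  have hquot := hnum.div hden (by positivity)
  refine hquot.congr fun t => ?_
  have hexp : Real.exp ((ρ2 / 2 - s) * t) = Real.exp (-(a₁ * t)) / Real.exp (-(ρ2 * t)) := by
    rw [← Real.exp_sub]
    congr 1
    rw [ha₁]
    ring
  simp only [Pi.div_apply, Pi.mul_apply]
  rw [hexp, div_mul_div_comm]
end

section
/- Let σ : G → U(H) be a unitary representation, K a compact subgroup with probability Haar measure, and β a probability measure on G that is both left and right K-invariant. If the space H^K of K-invariant vectors is spanned by a unit vector v₀, then the operator σ(β)v = ∫_G σ(g)v dβ(g) satisfies σ(β) = ψ·P, where P is the orthogonal projection onto H^K and ψ = ∫_G ⟨σ(g)v₀, v₀⟩ dβ(g). If H^K = {0}, then σ(β) = 0. -/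
open MeasureTheory Real Filter Topology

theorem biinvariant_average_formula {H : Type*} [NormedAddCommGroup H]
    [InnerProductSpace ℂ H] [CompleteSpace H]
    {G : Type*} [Group G] [MeasurableSpace G]
    (σ : G → (H ≃ₗᵢ[ℂ] H)) (hσ : ∀ g g' v, σ (g * g') v = σ g (σ g' v))
    (K : Subgroup G) (β : Measure G) [IsProbabilityMeasure β]
    (hleft : ∀ k ∈ K, Measure.map (fun g => k * g) β = β)
    (hright : ∀ k ∈ K, Measure.map (fun g => g * k) β = β)
    (hint : ∀ v : H, Integrable (fun g => σ g v) β) :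
    (∀ v₀ : H, ‖v₀‖ = 1 →
        {v : H | ∀ k ∈ K, σ k v = v} = Set.range (fun c : ℂ => c • v₀) →
        ∀ v : H, (∫ g, σ g v ∂β) =
          (∫ g, (inner ℂ v₀ (σ g v₀) : ℂ) ∂β) • ((inner ℂ v₀ v : ℂ) • v₀)) ∧
    ({v : H | ∀ k ∈ K, σ k v = v} = {0} →
        ∀ v : H, (∫ g, σ g v ∂β) = 0) := by
  set T : H → H := fun v => ∫ g, σ g v ∂β with hTdef
  -- σ 1 = id
  have hσ1 : ∀ v, σ 1 v = v := by
    intro v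
    have h := hσ 1 1 v
    rw [one_mul] at h
    exact ((σ 1).injective h.symm)
  have hinv : ∀ (k : G) (v : H), σ k (σ k⁻¹ v) = v := by
    intro k v
    rw [← hσ, mul_inv_cancel, hσ1]
  have hβne : β ≠ 0 := IsProbabilityMeasure.ne_zero β
  -- a.e. measurability of translations
  have haeₗ : ∀ k ∈ K, AEMeasurable (fun g => k * g) β := by
    intro k hk
    by_contra h
    exact hβne (by rw [← hleft k hk, Measure.map_of_not_aemeasurable h])
  have haeᵣ : ∀ k ∈ K, AEMeasurable (fun g => g * k) β := by
    intro k hk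
    by_contra h
    exact hβne (by rw [← hright k hk, Measure.map_of_not_aemeasurable h])
  -- T v is K-invariant
  have key_left : ∀ k ∈ K, ∀ v : H, σ k (T v) = T v := by
    intro k hk v
    have h1 : σ k (T v) = ∫ g, σ k (σ g v) ∂β :=
      ((σ k).toLinearIsometry.integral_comp_comm (fun g => σ g v)).symm
    have h2 : (∫ g, σ k (σ g v) ∂β) = ∫ g, σ (k * g) v ∂β := by
      simp only [hσ]
    have h3 : (∫ g, σ (k * g) v ∂β) = ∫ g, σ g v ∂β := by
      conv_rhs => rw [← hleft k hk]
      rw [integral_map (haeₗ k hk) (by rw [hleft k hk]; exact (hint v).1)]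
    rw [h1, h2, h3]
  have key_right : ∀ k ∈ K, ∀ v : H, T (σ k v) = T v := by
    intro k hk v
    have h2 : T (σ k v) = ∫ g, σ (g * k) v ∂β := by
      simp only [hTdef, hσ]
    have h3 : (∫ g, σ (g * k) v ∂β) = ∫ g, σ g v ∂β := by
      conv_rhs => rw [← hright k hk]
      rw [integral_map (haeᵣ k hk) (by rw [hright k hk]; exact (hint v).1)]
    rw [h2, h3]
  have Tmem : ∀ v : H, T v ∈ {v : H | ∀ k ∈ K, σ k v = v} := by
    intro v k hk
    exact key_left k hk v
  constructor
  · intro v₀ hv₀ hspan v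
    have hv₀v₀ : (inner ℂ v₀ v₀ : ℂ) = 1 := by
      rw [inner_self_eq_norm_sq_to_K, hv₀]
      norm_num
    -- the functional w ↦ ⟪v₀, T w⟫ is continuous linear
    have Tadd : ∀ x y : H, T (x + y) = T x + T y := by
      intro x y
      simp only [hTdef, map_add]
      exact integral_add (hint x) (hint y)
    have Tsmul : ∀ (a : ℂ) (x : H), T (a • x) = a • T x := by
      intro a x
      simp only [hTdef, _root_.map_smul]
      exact integral_smul a _
    have Tnorm : ∀ x : H, ‖T x‖ ≤ ‖x‖ := by
      intro x
      calc ‖T x‖ ≤ ∫ g, ‖σ g x‖ ∂β := norm_integral_le_integral_norm _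
        _ = ∫ _g, ‖x‖ ∂β := by simp
        _ = ‖x‖ := by simp
    let c : H →ₗ[ℂ] ℂ :=
      { toFun := fun w => (inner ℂ v₀ (T w) : ℂ)
        map_add' := fun x y => by
          show (inner ℂ v₀ (T (x + y)) : ℂ) = inner ℂ v₀ (T x) + inner ℂ v₀ (T y)
          rw [Tadd, inner_add_right]
        map_smul' := fun a x => by
          show (inner ℂ v₀ (T (a • x)) : ℂ) = a * inner ℂ v₀ (T x)
          rw [Tsmul, inner_smul_right] }
    have cbound : ∀ w : H, ‖c w‖ ≤ 1 * ‖w‖ := by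
      intro w
      calc ‖(inner ℂ v₀ (T w) : ℂ)‖ ≤ ‖v₀‖ * ‖T w‖ := norm_inner_le_norm _ _
        _ ≤ 1 * ‖w‖ := by rw [hv₀]; simpa using Tnorm w
    let C : H →L[ℂ] ℂ := LinearMap.mkContinuous c 1 cbound
    set u : H := (InnerProductSpace.toDual ℂ H).symm C with hu_def
    have hu : ∀ w : H, (inner ℂ u w : ℂ) = inner ℂ v₀ (T w) := by
      intro w
      exact InnerProductSpace.toDual_symm_apply
    -- u is K-invariant
    have humem : u ∈ {v : H | ∀ k ∈ K, σ k v = v} := by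
      intro k hk
      apply ext_inner_right ℂ
      intro w
      have h1 : (inner ℂ (σ k u) w : ℂ) = inner ℂ u (σ k⁻¹ w) := by
        conv_lhs => rw [← hinv k w]
        exact (σ k).inner_map_map u (σ k⁻¹ w)
      rw [h1, hu, hu, key_right k⁻¹ (inv_mem hk)]
    rw [hspan] at humem Tmem
    obtain ⟨a, ha⟩ := humem
    have hC : ∀ w : H, (inner ℂ v₀ (T w) : ℂ) = (starRingEnd ℂ) a * inner ℂ v₀ w := by
      intro w
      rw [← hu w, ← ha, inner_smul_left]
    -- T v = ⟪v₀, T v⟫ • v₀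
    obtain ⟨b, hb⟩ := Tmem v
    have hbval : (inner ℂ v₀ (T v) : ℂ) = b := by
      rw [← hb, inner_smul_right, hv₀v₀, mul_one]
    -- ψ = ⟪v₀, T v₀⟫
    have hψ : (∫ g, (inner ℂ v₀ (σ g v₀) : ℂ) ∂β) = inner ℂ v₀ (T v₀) :=
      integral_inner (hint v₀) v₀
    have hψval : (inner ℂ v₀ (T v₀) : ℂ) = (starRingEnd ℂ) a := by
      rw [hC v₀, hv₀v₀, mul_one]
    calc T v = b • v₀ := hb.symm
      _ = ((starRingEnd ℂ) a * inner ℂ v₀ v) • v₀ := by rw [← hbval, hC v]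
      _ = (∫ g, (inner ℂ v₀ (σ g v₀) : ℂ) ∂β) • ((inner ℂ v₀ v : ℂ) • v₀) := by
          rw [hψ, hψval, smul_smul]
  · intro h v
    have := Tmem v
    rw [h] at this
    exact this
end

section
/- For δ > 0, partition each interval [m, m+1], m ∈ ℕ, into ⌊e^{δm/2}+1⌋ subintervals of equal length, and let (t_n) be the increasing sequence of all endpoints. Then consecutive gaps satisfy t_{n+1} − t_n ≤ e^{-δ(t_n − 1)/2}, and Σ_n t_n² e^{-δ t_n} < ∞. -/
open Real

/-- Number of subintervals of `[m, m+1]`. -/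
noncomputable def sN (δ : ℝ) (m : ℕ) : ℕ := ⌊Real.exp (δ * m / 2) + 1⌋₊

lemma sN_pos (δ : ℝ) (m : ℕ) : 1 ≤ sN δ m := by
  apply Nat.le_floor
  push_cast
  linarith [Real.exp_pos (δ * m / 2)]

lemma exp_lt_sN (δ : ℝ) (m : ℕ) : Real.exp (δ * m / 2) < (sN δ m : ℝ) := by
  unfold sN
  rw [Nat.floor_add_one (Real.exp_nonneg _)]
  push_cast
  exact Nat.lt_floor_add_one _

noncomputable def sStep (δ : ℝ) (p : ℕ × ℕ) : ℕ × ℕ :=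
  if p.2 + 1 < sN δ p.1 then (p.1, p.2 + 1) else (p.1 + 1, 0)

/-- State machine enumerating the points. -/
noncomputable def sSeq (δ : ℝ) : ℕ → ℕ × ℕ
  | 0 => (1, 0)
  | n + 1 => sStep δ (sSeq δ n)

lemma sSeq_succ (δ : ℝ) (n : ℕ) : sSeq δ (n + 1) = sStep δ (sSeq δ n) := rfl

lemma sSeq_succ_pos (δ : ℝ) {n : ℕ} (h : (sSeq δ n).2 + 1 < sN δ (sSeq δ n).1) :
    sSeq δ (n + 1) = ((sSeq δ n).1, (sSeq δ n).2 + 1) := by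
  rw [sSeq_succ, sStep, if_pos h]

lemma sSeq_succ_neg (δ : ℝ) {n : ℕ} (h : ¬ (sSeq δ n).2 + 1 < sN δ (sSeq δ n).1) :
    sSeq δ (n + 1) = ((sSeq δ n).1 + 1, 0) := by
  rw [sSeq_succ, sStep, if_neg h]

noncomputable def tSeq (δ : ℝ) (n : ℕ) : ℝ :=
  ((sSeq δ n).1 : ℝ) + ((sSeq δ n).2 : ℝ) / (sN δ (sSeq δ n).1 : ℝ)

lemma sSeq_fst_pos (δ : ℝ) (n : ℕ) : 1 ≤ (sSeq δ n).1 := by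
  induction n with
  | zero => simp [sSeq]
  | succ n ih =>
    by_cases h : (sSeq δ n).2 + 1 < sN δ (sSeq δ n).1
    · rw [sSeq_succ_pos δ h]; exact ih
    · rw [sSeq_succ_neg δ h]; omega

lemma sSeq_snd_lt (δ : ℝ) (n : ℕ) : (sSeq δ n).2 < sN δ (sSeq δ n).1 := by
  induction n with
  | zero => simpa [sSeq] using Nat.lt_of_succ_le (sN_pos δ 1)
  | succ n ih =>
    by_cases h : (sSeq δ n).2 + 1 < sN δ (sSeq δ n).1
    · rw [sSeq_succ_pos δ h]; exact h
    · rw [sSeq_succ_neg δ h]; exact sN_pos δ _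

lemma sN_cast_pos (δ : ℝ) (m : ℕ) : (0 : ℝ) < (sN δ m : ℝ) := by
  exact_mod_cast sN_pos δ m

lemma tSeq_succ (δ : ℝ) (n : ℕ) :
    tSeq δ (n + 1) = tSeq δ n + 1 / (sN δ (sSeq δ n).1 : ℝ) := by
  have hN : (0 : ℝ) < (sN δ (sSeq δ n).1 : ℝ) := sN_cast_pos δ _
  by_cases h : (sSeq δ n).2 + 1 < sN δ (sSeq δ n).1
  · unfold tSeq
    rw [sSeq_succ_pos δ h]
    push_cast
    field_simp
    ring
  · have hk : (sSeq δ n).2 + 1 = sN δ (sSeq δ n).1 :=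
      Nat.le_antisymm (sSeq_snd_lt δ n) (not_lt.1 h)
    have hk' : ((sSeq δ n).2 : ℝ) + 1 = (sN δ (sSeq δ n).1 : ℝ) := by exact_mod_cast hk
    unfold tSeq
    rw [sSeq_succ_neg δ h]
    have h1 : ((sSeq δ n).2 : ℝ) / (sN δ (sSeq δ n).1 : ℝ) + 1 / (sN δ (sSeq δ n).1 : ℝ) = 1 := by
      rw [← add_div, hk', div_self hN.ne']
    push_cast
    rw [zero_div]
    linarith

lemma tSeq_strictMono (δ : ℝ) : StrictMono (tSeq δ) := by
  apply strictMono_nat_of_lt_succ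
  intro n
  rw [tSeq_succ]
  have hN : (0 : ℝ) < (sN δ (sSeq δ n).1 : ℝ) := sN_cast_pos δ _
  have : (0:ℝ) < 1 / (sN δ (sSeq δ n).1 : ℝ) := by positivity
  linarith

lemma tSeq_bounds (δ : ℝ) (n : ℕ) :
    ((sSeq δ n).1 : ℝ) ≤ tSeq δ n ∧ tSeq δ n < ((sSeq δ n).1 : ℝ) + 1 := by
  have hN : (0 : ℝ) < (sN δ (sSeq δ n).1 : ℝ) := sN_cast_pos δ _
  have hk : ((sSeq δ n).2 : ℝ) < (sN δ (sSeq δ n).1 : ℝ) := by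
    exact_mod_cast sSeq_snd_lt δ n
  constructor
  · have : (0:ℝ) ≤ ((sSeq δ n).2 : ℝ) / (sN δ (sSeq δ n).1 : ℝ) := by positivity
    unfold tSeq; linarith
  · have : ((sSeq δ n).2 : ℝ) / (sN δ (sSeq δ n).1 : ℝ) < 1 := (div_lt_one hN).2 hk
    unfold tSeq; linarith

lemma tSeq_gap (δ : ℝ) (hδ : 0 < δ) (n : ℕ) :
    tSeq δ (n + 1) - tSeq δ n ≤ Real.exp (-δ * (tSeq δ n - 1) / 2) := by
  rw [tSeq_succ]
  have hb := tSeq_bounds δ n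
  have h2 : Real.exp (δ * (tSeq δ n - 1) / 2) ≤ Real.exp (δ * (sSeq δ n).1 / 2) := by
    apply Real.exp_le_exp.2
    have ht : tSeq δ n - 1 ≤ ((sSeq δ n).1 : ℝ) := by linarith [hb.2]
    nlinarith [hδ.le]
  have h3 : Real.exp (δ * (sSeq δ n).1 / 2) < (sN δ (sSeq δ n).1 : ℝ) := exp_lt_sN δ _
  have h4 : Real.exp (δ * (tSeq δ n - 1) / 2) ≤ (sN δ (sSeq δ n).1 : ℝ) := h2.trans h3.le
  rw [show -δ * (tSeq δ n - 1) / 2 = -(δ * (tSeq δ n - 1) / 2) by ring, Real.exp_neg]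
  have h5 : (sN δ (sSeq δ n).1 : ℝ)⁻¹ ≤ (Real.exp (δ * (tSeq δ n - 1) / 2))⁻¹ :=
    inv_anti₀ (Real.exp_pos _) h4
  rw [one_div]
  linarith

lemma reach_step (δ : ℝ) {m k n : ℕ} (h : sSeq δ n = (m, k)) (hk : k + 1 < sN δ m) :
    sSeq δ (n + 1) = (m, k + 1) := by
  have h' : (sSeq δ n).2 + 1 < sN δ (sSeq δ n).1 := by rw [h]; exact hk
  rw [sSeq_succ_pos δ h', h]

lemma reach_roll (δ : ℝ) {m n : ℕ} (h : sSeq δ n = (m, sN δ m - 1)) :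
    sSeq δ (n + 1) = (m + 1, 0) := by
  have h1 := sN_pos δ m
  have h2 : ¬ ((sSeq δ n).2 + 1 < sN δ (sSeq δ n).1) := by
    rw [h]; show ¬ (sN δ m - 1 + 1 < sN δ m); omega
  rw [sSeq_succ_neg δ h2, h]

lemma reach_k (δ : ℝ) (m : ℕ) (hbase : ∃ n, sSeq δ n = (m, 0)) :
    ∀ k, k < sN δ m → ∃ n, sSeq δ n = (m, k) := by
  intro k
  induction k with
  | zero => intro _; exact hbase
  | succ k ih =>
    intro hk
    obtain ⟨n, hn⟩ := ih (by omega)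
    exact ⟨n + 1, reach_step δ hn hk⟩

lemma reach0 (δ : ℝ) : ∀ m, 1 ≤ m → ∃ n, sSeq δ n = (m, 0) := by
  intro m hm
  induction m, hm using Nat.le_induction with
  | base => exact ⟨0, rfl⟩
  | succ m hm ih =>
    have h1 := sN_pos δ m
    obtain ⟨n, hn⟩ := reach_k δ m ih (sN δ m - 1) (by omega)
    exact ⟨n + 1, reach_roll δ hn⟩

lemma reach (δ : ℝ) (m k : ℕ) (hm : 1 ≤ m) (hk : k < sN δ m) :
    ∃ n, sSeq δ n = (m, k) :=
  reach_k δ m (reach0 δ m hm) k hk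

lemma tSeq_range (δ : ℝ) :
    Set.range (tSeq δ) = {x : ℝ | ∃ m : ℕ, 1 ≤ m ∧ ∃ k : ℕ,
      k ≤ ⌊Real.exp (δ * m / 2) + 1⌋₊ ∧
      x = (m : ℝ) + (k : ℝ) / (⌊Real.exp (δ * m / 2) + 1⌋₊ : ℝ)} := by
  ext x
  constructor
  · rintro ⟨n, rfl⟩
    exact ⟨(sSeq δ n).1, sSeq_fst_pos δ n, (sSeq δ n).2, (sSeq_snd_lt δ n).le, rfl⟩
  · rintro ⟨m, hm, k, hk, rfl⟩
    rcases lt_or_eq_of_le hk with hk' | hk'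
    · obtain ⟨n, hn⟩ := reach δ m k hm hk'
      exact ⟨n, by unfold tSeq; rw [hn]; rfl⟩
    · obtain ⟨n, hn⟩ := reach0 δ (m + 1) (by omega)
      refine ⟨n, ?_⟩
      have hN : (0 : ℝ) < ((⌊Real.exp (δ * m / 2) + 1⌋₊ : ℕ) : ℝ) := sN_cast_pos δ m
      have hkcast : (k : ℝ) = ((⌊Real.exp (δ * m / 2) + 1⌋₊ : ℕ) : ℝ) := by exact_mod_cast hk'
      have e1 : tSeq δ n = (m : ℝ) + 1 := by
        unfold tSeq; rw [hn]; push_cast; ring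
      rw [e1, hkcast, div_self hN.ne']

lemma sSeq_injective (δ : ℝ) : Function.Injective (sSeq δ) := by
  intro a b hab
  have := (tSeq_strictMono δ).injective
  apply this
  unfold tSeq
  rw [hab]

lemma tSeq_summable (δ : ℝ) (hδ : 0 < δ) :
    Summable (fun n => (tSeq δ n) ^ 2 * Real.exp (-δ * tSeq δ n)) := by
  set r : ℝ := Real.exp (-δ / 2) with hr
  have hr0 : 0 < r := Real.exp_pos _
  have hr1 : r < 1 := Real.exp_lt_one_iff.2 (by linarith)
  -- The dominating function on states.
  set F : ℕ × ℕ → ℝ := fun p =>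
    if p.2 < sN δ p.1 then ((p.1 : ℝ) + 1) ^ 2 * Real.exp (-δ * p.1) else 0 with hF
  have hF0 : ∀ p, 0 ≤ F p := by
    intro p
    simp only [hF]
    split
    · positivity
    · exact le_refl 0
  have hfiber : ∀ m, Summable (fun k => F (m, k)) := by
    intro m
    apply summable_of_ne_finset_zero (s := Finset.range (sN δ m))
    intro k hk
    simp only [Finset.mem_range, not_lt] at hk
    simp [hF, Nat.not_lt.2 hk]
  have htsum : ∀ m, ∑' k, F (m, k) = (sN δ m : ℝ) * (((m : ℝ) + 1) ^ 2 * Real.exp (-δ * m)) := by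
    intro m
    rw [tsum_eq_sum (s := Finset.range (sN δ m))
      (fun k hk => by
        simp only [Finset.mem_range, not_lt] at hk
        simp [hF, Nat.not_lt.2 hk])]
    have hc : ∀ k ∈ Finset.range (sN δ m),
        F (m, k) = ((m : ℝ) + 1) ^ 2 * Real.exp (-δ * m) := by
      intro k hk
      simp [hF, Finset.mem_range.1 hk]
    rw [Finset.sum_congr rfl hc, Finset.sum_const, Finset.card_range, nsmul_eq_mul]
  have hgeo : Summable (fun m : ℕ => 2 * (((m : ℝ) + 1) ^ 2) * r ^ m) := by
    have h2 := summable_pow_mul_geometric_of_norm_lt_one (R := ℝ) 2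
      (by rw [Real.norm_eq_abs, abs_of_pos hr0]; exact hr1)
    have h1 := summable_pow_mul_geometric_of_norm_lt_one (R := ℝ) 1
      (by rw [Real.norm_eq_abs, abs_of_pos hr0]; exact hr1)
    have h0 := summable_geometric_of_lt_one hr0.le hr1
    have := ((h2.add ((h1.mul_left 2))).add h0).mul_left 2
    apply this.congr
    intro m
    push_cast
    ring
  have hFsum : Summable F := by
    rw [summable_prod_of_nonneg hF0]
    refine ⟨hfiber, ?_⟩
    apply Summable.of_nonneg_of_le (fun m => ?_) (fun m => ?_) hgeo
    · rw [htsum m]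
      positivity
    · rw [htsum m]
      have hNle : (sN δ m : ℝ) ≤ 2 * Real.exp (δ * m / 2) := by
        have h1 : (sN δ m : ℝ) ≤ Real.exp (δ * m / 2) + 1 :=
          Nat.floor_le (by positivity)
        have h2 : (1:ℝ) ≤ Real.exp (δ * m / 2) := by
          exact Real.one_le_exp (by positivity)
        linarith
      have hrpow : Real.exp (δ * m / 2) * Real.exp (-δ * m) = r ^ m := by
        rw [← Real.exp_add, hr, ← Real.exp_nat_mul]
        congr 1
        ring
      have hpos : (0:ℝ) ≤ ((m : ℝ) + 1) ^ 2 * Real.exp (-δ * m) := by positivity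
      calc (sN δ m : ℝ) * (((m : ℝ) + 1) ^ 2 * Real.exp (-δ * m))
          ≤ 2 * Real.exp (δ * m / 2) * (((m : ℝ) + 1) ^ 2 * Real.exp (-δ * m)) := by
            apply mul_le_mul_of_nonneg_right hNle hpos
        _ = 2 * (((m : ℝ) + 1) ^ 2) * (Real.exp (δ * m / 2) * Real.exp (-δ * m)) := by ring
        _ = 2 * (((m : ℝ) + 1) ^ 2) * r ^ m := by rw [hrpow]
  have hcomp : Summable (F ∘ sSeq δ) := hFsum.comp_injective (sSeq_injective δ)
  apply Summable.of_nonneg_of_le (fun n => ?_) (fun n => ?_) hcomp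
  · have h1 : (1:ℝ) ≤ tSeq δ n := by
      have := tSeq_bounds δ n
      have h := sSeq_fst_pos δ n
      have : (1:ℝ) ≤ ((sSeq δ n).1 : ℝ) := by exact_mod_cast h
      linarith [(tSeq_bounds δ n).1]
    positivity
  · have hb := tSeq_bounds δ n
    have hfst : (1:ℝ) ≤ ((sSeq δ n).1 : ℝ) := by exact_mod_cast sSeq_fst_pos δ n
    have hFval : F (sSeq δ n) = (((sSeq δ n).1 : ℝ) + 1) ^ 2 * Real.exp (-δ * (sSeq δ n).1) := by
      simp [hF, sSeq_snd_lt δ n]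
    rw [Function.comp_apply, hFval]
    have ht1 : (0:ℝ) ≤ tSeq δ n := by linarith
    have hsq : (tSeq δ n) ^ 2 ≤ (((sSeq δ n).1 : ℝ) + 1) ^ 2 := by
      apply pow_le_pow_left₀ ht1 hb.2.le
    have hexp : Real.exp (-δ * tSeq δ n) ≤ Real.exp (-δ * (sSeq δ n).1) := by
      apply Real.exp_le_exp.2
      nlinarith [hb.1, hδ.le]
    apply mul_le_mul hsq hexp (Real.exp_pos _).le (by positivity)

theorem sampling_times_construction (δ : ℝ) (hδ : 0 < δ) :
    ∃ t : ℕ → ℝ, StrictMono t ∧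
      Set.range t = {x : ℝ | ∃ m : ℕ, 1 ≤ m ∧ ∃ k : ℕ,
        k ≤ ⌊Real.exp (δ * m / 2) + 1⌋₊ ∧
        x = (m : ℝ) + (k : ℝ) / (⌊Real.exp (δ * m / 2) + 1⌋₊ : ℝ)} ∧
      (∀ n, t (n + 1) - t n ≤ Real.exp (-δ * (t n - 1) / 2)) ∧
      Summable (fun n => (t n) ^ 2 * Real.exp (-δ * t n)) := by
  exact ⟨tSeq δ, tSeq_strictMono δ, tSeq_range δ, tSeq_gap δ hδ, tSeq_summable δ hδ⟩
end

section
/- In the setting of Theorem 1.4 (mean ergodic theorem with purity), if P₁f ≠ 0 then ‖A_t f − P₀ f‖₂ · e^{(ρ−s₁)t} converges to c₁‖P₁f‖₂ > 0 as t → ∞; in particular ‖A_t f − P₀f‖₂ ≍ e^{-(ρ-s₁)t}. In abstract form: if ψ_j : [1,∞) → ℝ satisfy ψ_j(t)e^{(ρ−s_j)t} → c_j > 0 for ρ > s₁ > ⋯ > s_k > r, P_j are pairwise orthogonal projections on a Hilbert space, and ‖A_t f − Σ_{j=0}^k ψ_j(t)P_j f‖ ≤ D t e^{-(ρ−r)t}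 with ψ₀ = 1, then for f with P₁f ≠ 0, e^{(ρ−s₁)t}‖A_t f − P₀f‖ → c₁‖P₁f‖. -/
open Real Filter Topology

theorem deviation_norm_asymptotic {H : Type*} [NormedAddCommGroup H] [InnerProductSpace ℂ H]
    (k : ℕ) (hk : 1 ≤ k) (ρ r D : ℝ) (hr : 0 < r) (hD : 0 < D)
    (s : Fin (k + 1) → ℝ) (hs0 : s 0 = ρ) (hanti : StrictAnti s) (hsr : r < s (Fin.last k))
    (c : Fin (k + 1) → ℝ) (hc : ∀ j, 0 < c j)
    (ψ : Fin (k + 1) → ℝ → ℝ) (hψ0 : ∀ t, ψ 0 t = 1)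
    (hψ : ∀ j : Fin (k + 1), j ≠ 0 →
      Tendsto (fun t => ψ j t * Real.exp ((ρ - s j) * t)) atTop (𝓝 (c j)))
    (P : Fin (k + 1) → H →L[ℂ] H) (horth : ∀ i j, i ≠ j → (P i).comp (P j) = 0)
    (A : ℝ → H → H) (f : H)
    (hmean : ∀ t : ℝ, 1 ≤ t →
      ‖A t f - ∑ j, ψ j t • P j f‖ ≤ D * t * Real.exp (-(ρ - r) * t))
    (h1 : P 1 f ≠ 0) :
    Tendsto (fun t => Real.exp ((ρ - s 1) * t) * ‖A t f - P 0 f‖)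
      atTop (𝓝 (c 1 * ‖P 1 f‖)) := by
  have h1le : (1 : Fin (k + 1)) ≤ Fin.last k := by
    rw [Fin.le_def]
    simpa [Fin.val_one, Nat.mod_eq_of_lt (Nat.lt_succ_of_le hk)] using hk
  have hs1r : r < s 1 := lt_of_lt_of_le hsr (hanti.antitone h1le)
  -- decomposition
  have hdecomp : ∀ t : ℝ,
      A t f - P 0 f = (A t f - ∑ j, ψ j t • P j f)
        + ∑ j ∈ Finset.univ.erase 0, ψ j t • P j f := by
    intro t
    have hsum : ∑ j, ψ j t • P j f
        = P 0 f + ∑ j ∈ Finset.univ.erase 0, ψ j t • P j f := by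
      rw [← Finset.add_sum_erase _ _ (Finset.mem_univ 0), hψ0, one_smul]
    rw [hsum]; abel
  -- vector-valued convergence
  have key : Tendsto (fun t => Real.exp ((ρ - s 1) * t) • (A t f - P 0 f)) atTop
      (𝓝 (c 1 • P 1 f)) := by
    have heq : ∀ t : ℝ, Real.exp ((ρ - s 1) * t) • (A t f - P 0 f)
        = Real.exp ((ρ - s 1) * t) • (A t f - ∑ j, ψ j t • P j f)
          + ∑ j ∈ Finset.univ.erase 0,
              (Real.exp ((ρ - s 1) * t) * ψ j t) • P j f := by
      intro t
      rw [hdecomp t, smul_add, Finset.smul_sum]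
      simp [smul_smul]
    have herr : Tendsto
        (fun t => Real.exp ((ρ - s 1) * t) • (A t f - ∑ j, ψ j t • P j f))
        atTop (𝓝 (0 : H)) := by
      have hb : Tendsto (fun t : ℝ => D * t * Real.exp ((r - s 1) * t)) atTop (𝓝 0) := by
        have h0 : Tendsto (fun t : ℝ => (s 1 - r) * t) atTop atTop :=
          Tendsto.const_mul_atTop (by linarith) tendsto_id
      -- D * t * exp ((r - s1) t) = (D / (s1 - r)) * (((s1-r)*t) * exp (-(s1-r)*t))
        have h2 : Tendsto (fun x : ℝ => x ^ 1 * Real.exp (-x)) atTop (𝓝 0) :=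
          tendsto_pow_mul_exp_neg_atTop_nhds_zero 1
        have h3 := (h2.comp h0).const_mul (D / (s 1 - r))
        rw [mul_zero] at h3
        refine h3.congr' ?_
        filter_upwards [eventually_ge_atTop (0:ℝ)] with t _
        have hne : s 1 - r ≠ 0 := by linarith
        show D / (s 1 - r) * (((s 1 - r) * t) ^ 1 * Real.exp (-((s 1 - r) * t))) = D * t * Real.exp ((r - s 1) * t)
        rw [pow_one, show -((s 1 - r) * t) = (r - s 1) * t by ring]
        rw [div_mul_eq_mul_div, div_eq_iff hne]; ring
      refine squeeze_zero_norm' ?_ hb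
      filter_upwards [eventually_ge_atTop (1:ℝ)] with t ht
      have := hmean t ht
      rw [norm_smul, Real.norm_eq_abs, abs_of_pos (Real.exp_pos _)]
      calc Real.exp ((ρ - s 1) * t) * ‖A t f - ∑ j, ψ j t • P j f‖
          ≤ Real.exp ((ρ - s 1) * t) * (D * t * Real.exp (-(ρ - r) * t)) :=
            mul_le_mul_of_nonneg_left this (Real.exp_pos _).le
        _ = D * t * Real.exp ((r - s 1) * t) := by
            have hE : Real.exp ((ρ - s 1) * t) * Real.exp (-(ρ - r) * t)
                = Real.exp ((r - s 1) * t) := by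
              rw [← Real.exp_add]; congr 1; ring
            rw [← hE]; ring
    have hsumlim : Tendsto
        (fun t => ∑ j ∈ Finset.univ.erase 0,
            (Real.exp ((ρ - s 1) * t) * ψ j t) • P j f) atTop
        (𝓝 (c 1 • P 1 f)) := by
      have hlim : ∀ j ∈ Finset.univ.erase (0 : Fin (k+1)),
          Tendsto (fun t => (Real.exp ((ρ - s 1) * t) * ψ j t) • P j f) atTop
            (𝓝 (if j = 1 then c 1 • P 1 f else 0)) := by
        intro j hj
        have hj0 : j ≠ 0 := Finset.ne_of_mem_erase hj
        by_cases hj1 : j = 1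
        · subst hj1
          simp only [if_pos rfl]
          have := (hψ 1 hj0).smul_const (P 1 f)
          refine this.congr fun t => ?_
          rw [mul_comm]
        · simp only [if_neg hj1]
          have hv1 : (1 : Fin (k+1)).val = 1 := by
            simp [Fin.val_one, Nat.mod_eq_of_lt (Nat.lt_succ_of_le hk)]
          have hlt : s j < s 1 := by
            apply hanti
            have hjv0 : j.val ≠ 0 := fun h => hj0 (Fin.ext (by rw [h]; simp))
            have hjv1 : j.val ≠ 1 := fun h => hj1 (Fin.ext (by rw [h, hv1]))
            rw [Fin.lt_def, hv1]
            omega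
          have hdec : Tendsto (fun t : ℝ => Real.exp ((s j - s 1) * t)) atTop (𝓝 0) := by
            rw [Real.tendsto_exp_comp_nhds_zero]
            exact (tendsto_const_mul_atBot_of_neg (by linarith)).2 tendsto_id
          have hm := ((hψ j hj0).mul hdec).smul_const (P j f)
          rw [mul_zero, zero_smul] at hm
          refine hm.congr fun t => ?_
          congr 1
          rw [mul_assoc, ← Real.exp_add, mul_comm]
          congr 2
          ring
      have := tendsto_finset_sum _ hlim
      have hone : (1 : Fin (k+1)) ∈ Finset.univ.erase 0 := by
        simp [Fin.ext_iff, Fin.val_one, Nat.mod_eq_of_lt (Nat.lt_succ_of_le hk)]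
      have hsum_eq : (∑ j ∈ Finset.univ.erase (0 : Fin (k+1)),
          if j = 1 then c 1 • P 1 f else (0:H)) = c 1 • P 1 f := by
        rw [Finset.sum_ite_eq' (Finset.univ.erase 0) 1 (fun _ => c 1 • P 1 f), if_pos hone]
      rwa [hsum_eq] at this
    have := herr.add hsumlim
    rw [zero_add] at this
    exact this.congr fun t => (heq t).symm
  have := (continuous_norm.tendsto _).comp key
  simp only [Function.comp_def] at this
  have hnorm : ∀ t : ℝ, ‖Real.exp ((ρ - s 1) * t) • (A t f - P 0 f)‖
      = Real.exp ((ρ - s 1) * t) * ‖A t f - P 0 f‖ := fun t => by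
    rw [norm_smul, Real.norm_eq_abs, abs_of_pos (Real.exp_pos _)]
  have hc1 : ‖c 1 • P 1 f‖ = c 1 * ‖P 1 f‖ := by
    rw [norm_smul, Real.norm_eq_abs, abs_of_pos (hc 1)]
  rw [hc1] at this
  exact this.congr fun t => hnorm t
end

section
/- In the abstract setting of the previous statement, if additionally for a.e. x one has |A_n f(x) − Σ_{j=0}^k ψ_j(n)(P_jf)(x)| ≤ C(x)·n^{3/2+ε}e^{-(ρ−r)n} with C finite a.e., and P₁f ≠ 0, then (A_n f − P₀f)/‖A_n f − P₀f‖₂ converges almost everywhere to (P₁f)/‖P₁f‖₂ as n → ∞ through the integers. -/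
open MeasureTheory Real Filter Topology

/-- If `ψ1 n * exp (σ n) → c ≠ 0` and `g n * exp (σ n) → 0`, then `g n / ψ1 n → 0`. -/
lemma aux_div_tendsto_zero (σ : ℝ) (ψ1 g : ℕ → ℝ) (c : ℝ) (hc : c ≠ 0)
    (h1 : Tendsto (fun n : ℕ => ψ1 n * Real.exp (σ * n)) atTop (𝓝 c))
    (hg : Tendsto (fun n : ℕ => g n * Real.exp (σ * n)) atTop (𝓝 0)) :
    Tendsto (fun n : ℕ => g n / ψ1 n) atTop (𝓝 0) := by
  have key : (fun n : ℕ => g n / ψ1 n)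
      = fun n : ℕ => (g n * Real.exp (σ * n)) / (ψ1 n * Real.exp (σ * n)) := by
    funext n
    rw [mul_div_mul_right _ _ (Real.exp_ne_zero _)]
  rw [key]
  have h := hg.div h1 hc
  rw [zero_div] at h
  exact h

lemma aux_err_tendsto_zero (K a b σ : ℝ) (h : σ < b) :
    Tendsto (fun n : ℕ => (K * (n : ℝ) ^ a * Real.exp (-b * n)) * Real.exp (σ * n))
      atTop (𝓝 0) := by
  have h0 : Tendsto (fun x : ℝ => x ^ a * Real.exp (-(b - σ) * x)) atTop (𝓝 0) :=
    tendsto_rpow_mul_exp_neg_mul_atTop_nhds_zero a (b - σ) (by linarith)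
  have h1 := (h0.comp (tendsto_natCast_atTop_atTop (R := ℝ))).const_mul K
  rw [mul_zero] at h1
  refine h1.congr fun n => ?_
  simp only [Function.comp_apply]
  rw [mul_assoc (K * (n:ℝ)^a), ← Real.exp_add, mul_assoc K,
    show (-b * (n:ℝ) + σ * n) = -(b - σ) * n by ring]

lemma Lp_coeFn_sum {X E : Type*} [MeasurableSpace X] [NormedAddCommGroup E] {P : ENNReal}
    {μ : MeasureTheory.Measure X} {ι : Type*} (s : Finset ι) (f : ι → Lp E P μ) :
    (↑↑(∑ j ∈ s, f j) : X → E) =ᵐ[μ] fun x => ∑ j ∈ s, f j x := by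
  classical
  induction s using Finset.induction with
  | empty => simp only [Finset.sum_empty]; exact Lp.coeFn_zero E P μ
  | @insert i s hi ih =>
    rw [Finset.sum_insert hi]
    filter_upwards [Lp.coeFn_add (f i) (∑ j ∈ s, f j), ih] with x hx1 hx2
    rw [hx1, Pi.add_apply, hx2, Finset.sum_insert hi]


set_option maxHeartbeats 1000000 in
lemma aux_split {M : Type*} [AddCommMonoid M] (k : ℕ) (hk : 1 ≤ k) (f : Fin (k+1) → M) :
    ∑ j, f j = f 0 + (f 1 + ∑ j ∈ (Finset.univ.erase 0).erase 1, f j) := by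
  have hv1 : ((1 : Fin (k+1)) : ℕ) = 1 := by rw [Fin.val_one', Nat.mod_eq_of_lt (by omega)]
  have h10 : (1 : Fin (k+1)) ≠ 0 := by
    intro h
    have := congrArg Fin.val h
    rw [hv1] at this
    simp at this
  rw [← Finset.add_sum_erase _ f (Finset.mem_univ 0)]
  congr 1
  rw [← Finset.add_sum_erase _ f (Finset.mem_erase.mpr ⟨h10, Finset.mem_univ 1⟩)]

set_option maxHeartbeats 1000000 in
theorem normalized_deviations_converge_ae {X : Type*} [MeasurableSpace X] (μ : Measure X)
    [IsProbabilityMeasure μ]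
    (k : ℕ) (hk : 1 ≤ k) (ρ r D ε : ℝ) (hr : 0 < r) (hD : 0 < D) (hε : 0 < ε)
    (s : Fin (k + 1) → ℝ) (hs0 : s 0 = ρ) (hanti : StrictAnti s) (hsr : r < s (Fin.last k))
    (c : Fin (k + 1) → ℝ) (hc : ∀ j, 0 < c j)
    (ψ : Fin (k + 1) → ℕ → ℝ) (hψ0 : ∀ n, ψ 0 n = 1)
    (hψ : ∀ j : Fin (k + 1), j ≠ 0 →
      Tendsto (fun n : ℕ => ψ j n * Real.exp ((ρ - s j) * n)) atTop (𝓝 (c j)))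
    (p : Fin (k + 1) → X → ℂ) (hp2 : ∀ j, MemLp (p j) 2 μ)
    (horth : ∀ i j, i ≠ j → ∫ x, p i x * (starRingEnd ℂ) (p j x) ∂μ = 0)
    (A : ℕ → X → ℂ) (hA2 : ∀ n, MemLp (A n) 2 μ)
    (hmean : ∀ n : ℕ, 1 ≤ n →
      eLpNorm (fun x => A n x - ∑ j, ψ j n * p j x) 2 μ ≤
        ENNReal.ofReal (D * n * Real.exp (-(ρ - r) * n)))
    (C : X → ℝ)
    (hpt : ∀ᵐ x ∂μ, ∀ n : ℕ, 1 ≤ n →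
      ‖A n x - ∑ j, ψ j n * p j x‖ ≤ C x * (n : ℝ) ^ ((3:ℝ)/2 + ε) * Real.exp (-(ρ - r) * n))
    (h1 : eLpNorm (p 1) 2 μ ≠ 0) :
    ∀ᵐ x ∂μ, Tendsto
      (fun n : ℕ => (A n x - p 0 x) / ((eLpNorm (fun y => A n y - p 0 y) 2 μ).toReal : ℂ))
      atTop (𝓝 (p 1 x / ((eLpNorm (p 1) 2 μ).toReal : ℂ))) := by
  classical
  have hv1 : ((1 : Fin (k+1)) : ℕ) = 1 := by
    rw [Fin.val_one', Nat.mod_eq_of_lt (by omega)]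
  have h10 : (1 : Fin (k+1)) ≠ 0 := by
    intro h
    have := congrArg Fin.val h
    rw [hv1] at this
    simp at this
  have hs1r : r < s 1 := by
    refine lt_of_lt_of_le hsr (hanti.antitone ?_)
    rw [Fin.le_def, hv1, Fin.val_last]
    exact hk
  have hρs1 : s 1 < ρ := by
    have h01 : (0 : Fin (k+1)) < 1 := by
      rw [Fin.lt_def, hv1]; simp
    have := hanti h01
    rwa [hs0] at this
  have hc1 : (0:ℝ) < c 1 := hc 1
  have hψ1 := hψ 1 h10
  have hψ1pos : ∀ᶠ n : ℕ in atTop, 0 < ψ 1 n := by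
    filter_upwards [hψ1.eventually (eventually_gt_nhds hc1)] with n hn
    by_contra hcon
    push_neg at hcon
    nlinarith [Real.exp_pos ((ρ - s 1) * (n:ℝ))]
  -- the error-to-ψ1 ratio tends to zero
  have herr : ∀ K a : ℝ,
      Tendsto (fun n : ℕ => K * (n:ℝ)^a * Real.exp (-(ρ - r) * n) / ψ 1 n) atTop (𝓝 0) :=
    fun K a => aux_div_tendsto_zero (ρ - s 1) _ _ (c 1) hc1.ne' hψ1
      (aux_err_tendsto_zero K a (ρ - r) (ρ - s 1) (by linarith))
  -- ψ j / ψ 1 → 0 for j ∉ {0, 1}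
  have hTz : ∀ j : Fin (k+1), j ≠ 0 → j ≠ 1 →
      Tendsto (fun n : ℕ => ψ j n / ψ 1 n) atTop (𝓝 0) := by
    intro j hj0 hj1
    have hj0' : (j:ℕ) ≠ 0 := fun h => hj0 (Fin.ext (by simp [h]))
    have hj1' : (j:ℕ) ≠ 1 := fun h => hj1 (Fin.ext (by rw [hv1, h]))
    have hsj : s j < s 1 := hanti (by rw [Fin.lt_def, hv1]; omega)
    have hexp : Tendsto (fun n : ℕ => Real.exp ((s j - s 1) * n)) atTop (𝓝 0) := by
      have h1' : Tendsto (fun n : ℕ => (s 1 - s j) * (n:ℝ)) atTop atTop :=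
        Tendsto.const_mul_atTop (by linarith) (tendsto_natCast_atTop_atTop (R := ℝ))
      have h2' : Tendsto (fun n : ℕ => (s j - s 1) * (n:ℝ)) atTop atBot := by
        refine (tendsto_neg_atTop_atBot.comp h1').congr fun n => ?_
        simp only [Function.comp_apply]; ring
      exact Real.tendsto_exp_atBot.comp h2'
    have hg : Tendsto (fun n : ℕ => ψ j n * Real.exp ((ρ - s 1) * n)) atTop (𝓝 0) := by
      have h3 := (hψ j hj0).mul hexp
      rw [mul_zero] at h3
      refine h3.congr fun n => ?_
      rw [mul_assoc, ← Real.exp_add,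
        show (ρ - s j) * (n:ℝ) + (s j - s 1) * n = (ρ - s 1) * n by ring]
    exact aux_div_tendsto_zero (ρ - s 1) _ _ (c 1) hc1.ne' hψ1 hg
  set T : Finset (Fin (k+1)) := (Finset.univ.erase 0).erase 1 with hTdef
  -- the L² error function
  have hE2 : ∀ n : ℕ, MemLp (fun x => A n x - ∑ j, ψ j n * p j x) 2 μ := by
    intro n
    have h := memLp_finset_sum' (μ := μ) (p := 2) Finset.univ
      (f := fun j => fun x => ((ψ j n : ℝ) : ℂ) * p j x) (fun j _ => (hp2 j).const_mul _)
    have heq : (∑ j : Fin (k+1), fun x => ((ψ j n : ℝ):ℂ) * p j x)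
        = fun x => ∑ j, ((ψ j n:ℝ):ℂ) * p j x := by
      funext x; simp [Finset.sum_apply]
    rw [heq] at h
    exact (hA2 n).sub h
  set q : Fin (k+1) → Lp ℂ 2 μ := fun j => (hp2 j).toLp (p j) with hq
  set aa : ℕ → Lp ℂ 2 μ := fun n => (hA2 n).toLp (A n) with haa
  set e : ℕ → Lp ℂ 2 μ := fun n => (hE2 n).toLp _ with he
  set B : ℕ → Lp ℂ 2 μ := fun n => aa n - q 0 with hB
  set L : ℝ := ‖q 1‖ with hLdef
  have hLnorm : L = (eLpNorm (p 1) 2 μ).toReal := Lp.norm_toLp (p 1) (hp2 1)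
  have hLpos : 0 < L := hLnorm ▸ ENNReal.toReal_pos h1 (hp2 1).2.ne
  -- pointwise decomposition
  have hptdecomp : ∀ (n : ℕ) (x : X), A n x - p 0 x - ((ψ 1 n : ℝ) : ℂ) * p 1 x
      = (∑ j ∈ T, ((ψ j n : ℝ) : ℂ) * p j x) + (A n x - ∑ j, ((ψ j n : ℝ) : ℂ) * p j x) := by
    intro n x
    rw [aux_split k hk (fun j => ((ψ j n : ℝ) : ℂ) * p j x), hψ0 n]
    push_cast
    ring
  -- coeFn of B n
  have hBc : ∀ n : ℕ, (↑↑(B n) : X → ℂ) =ᵐ[μ] fun x => A n x - p 0 x := by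
    intro n
    rw [hB]
    filter_upwards [Lp.coeFn_sub (aa n) (q 0), (hA2 n).coeFn_toLp, (hp2 0).coeFn_toLp]
      with x h h2 h3
    rw [h, Pi.sub_apply,
      show (↑↑(aa n) : X → ℂ) x = A n x from h2,
      show (↑↑(q 0) : X → ℂ) x = p 0 x from h3]
  have hNeq : ∀ n : ℕ, (eLpNorm (fun y => A n y - p 0 y) 2 μ).toReal = ‖B n‖ := by
    intro n
    rw [Lp.norm_def, eLpNorm_congr_ae (hBc n)]
  -- Lp decomposition of the remainder
  have hRdecomp : ∀ n : ℕ, B n - ((ψ 1 n : ℝ) : ℂ) • q 1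
      = (∑ j ∈ T, ((ψ j n : ℝ) : ℂ) • q j) + e n := by
    intro n
    apply Lp.ext
    have hsm : ∀ j : Fin (k+1), (↑↑(((ψ j n : ℝ) : ℂ) • q j) : X → ℂ)
        =ᵐ[μ] fun x => ((ψ j n : ℝ):ℂ) * p j x := by
      intro j
      filter_upwards [Lp.coeFn_smul (((ψ j n : ℝ):ℂ)) (q j), (hp2 j).coeFn_toLp] with x h h2
      rw [h, Pi.smul_apply, smul_eq_mul,
        show (↑↑(q j) : X → ℂ) x = p j x from h2]
    have hsm' : ∀ᵐ x ∂μ, ∀ j : Fin (k+1), (↑↑(((ψ j n : ℝ) : ℂ) • q j) : X → ℂ) x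
        = ((ψ j n : ℝ):ℂ) * p j x := ae_all_iff.mpr hsm
    filter_upwards [Lp.coeFn_sub (B n) (((ψ 1 n : ℝ):ℂ) • q 1), hBc n,
      Lp.coeFn_add (∑ j ∈ T, ((ψ j n:ℝ):ℂ) • q j) (e n),
      Lp_coeFn_sum T (fun j => ((ψ j n:ℝ):ℂ) • q j), hsm', (hE2 n).coeFn_toLp]
      with x h h2 h3 h4 h5 h6
    rw [h, Pi.sub_apply, h2, h5 1, h3, Pi.add_apply, h4]
    rw [show (↑↑(e n) : X → ℂ) x = A n x - ∑ j, ((ψ j n:ℝ):ℂ) * p j x from h6]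
    rw [Finset.sum_congr rfl fun j _ => h5 j]
    exact hptdecomp n x
  -- norm bound on remainder
  have hnormR : ∀ n : ℕ, 1 ≤ n → ‖B n - ((ψ 1 n:ℝ):ℂ) • q 1‖
      ≤ (∑ j ∈ T, |ψ j n| * ‖q j‖) + D * n * Real.exp (-(ρ - r) * n) := by
    intro n hn
    rw [hRdecomp n]
    refine (norm_add_le _ _).trans (add_le_add ?_ ?_)
    · refine (norm_sum_le _ _).trans (Finset.sum_le_sum fun j _ => le_of_eq ?_)
      rw [norm_smul, Complex.norm_real, Real.norm_eq_abs]
    · have hee : ‖e n‖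
          = (eLpNorm (fun x => A n x - ∑ j, ((ψ j n:ℝ):ℂ) * p j x) 2 μ).toReal :=
        Lp.norm_toLp _ _
      rw [hee]
      exact ENNReal.toReal_le_of_le_ofReal (by positivity) (hmean n hn)
  -- remainder norm ratio tends to 0
  have hRratio : Tendsto (fun n : ℕ => ‖B n - ((ψ 1 n:ℝ):ℂ) • q 1‖ / ψ 1 n) atTop (𝓝 0) := by
    have hsum : Tendsto (fun n : ℕ => ∑ j ∈ T, |ψ j n / ψ 1 n| * ‖q j‖) atTop (𝓝 0) := by
      have h := tendsto_finset_sum T (f := fun j (n : ℕ) => |ψ j n / ψ 1 n| * ‖q j‖)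
        (a := fun _ => 0) (fun j hj => by
          have hj1 : j ≠ 1 := (Finset.mem_erase.mp hj).1
          have hj0 : j ≠ 0 := (Finset.mem_erase.mp (Finset.mem_erase.mp hj).2).1
          have := ((hTz j hj0 hj1).abs).mul_const ‖q j‖
          simpa using this)
      simpa using h
    have hGlim : Tendsto (fun n : ℕ => (∑ j ∈ T, |ψ j n / ψ 1 n| * ‖q j‖)
        + D * (n:ℝ)^(1:ℝ) * Real.exp (-(ρ-r)*n) / ψ 1 n) atTop (𝓝 0) := by
      have := hsum.add (herr D 1)
      simpa using this
    refine squeeze_zero' ?_ ?_ hGlim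
    · filter_upwards [hψ1pos] with n hn
      positivity
    · filter_upwards [hψ1pos, eventually_ge_atTop 1] with n hn h1n
      refine le_trans ((div_le_div_iff_of_pos_right hn).mpr (hnormR n h1n)) (le_of_eq ?_)
      rw [add_div, Finset.sum_div]
      congr 1
      · exact Finset.sum_congr rfl fun j _ => by
          rw [abs_div, abs_of_pos hn]; ring
      · rw [Real.rpow_one]
  -- norm of B ratio tends to L
  have hNlim : Tendsto (fun n : ℕ => ‖B n‖ / ψ 1 n) atTop (𝓝 L) := by
    rw [tendsto_iff_dist_tendsto_zero]
    refine squeeze_zero' (Eventually.of_forall fun n => dist_nonneg) ?_ hRratio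
    filter_upwards [hψ1pos] with n hn
    rw [Real.dist_eq]
    have h1' := abs_norm_sub_norm_le (B n) (((ψ 1 n:ℝ):ℂ) • q 1)
    have h2' : ‖((ψ 1 n:ℝ):ℂ) • q 1‖ = ψ 1 n * L := by
      rw [norm_smul, Complex.norm_real, Real.norm_eq_abs, abs_of_pos hn, hLdef]
    rw [h2'] at h1'
    have h3' : ‖B n‖ / ψ 1 n - L = (‖B n‖ - ψ 1 n * L) / ψ 1 n := by
      field_simp
    rw [h3', abs_div, abs_of_pos hn]
    exact (div_le_div_iff_of_pos_right hn).mpr h1'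
  have hBpos : ∀ᶠ n : ℕ in atTop, 0 < ‖B n‖ := by
    filter_upwards [hNlim.eventually (eventually_gt_nhds hLpos), hψ1pos] with n h hn
    have := mul_pos h hn
    rwa [div_mul_cancel₀ _ hn.ne'] at this
  have hinv : Tendsto (fun n : ℕ => ψ 1 n / ‖B n‖) atTop (𝓝 L⁻¹) := by
    refine (hNlim.inv₀ hLpos.ne').congr fun n => ?_
    rw [inv_div]
  -- pointwise part
  filter_upwards [hpt] with x hx
  have hrem : Tendsto (fun n : ℕ => ‖(∑ j ∈ T, ((ψ j n:ℝ):ℂ) * p j x)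
      + (A n x - ∑ j, ((ψ j n:ℝ):ℂ) * p j x)‖ / ψ 1 n) atTop (𝓝 0) := by
    have hsum : Tendsto (fun n : ℕ => ∑ j ∈ T, |ψ j n / ψ 1 n| * ‖p j x‖) atTop (𝓝 0) := by
      have h := tendsto_finset_sum T (f := fun j (n : ℕ) => |ψ j n / ψ 1 n| * ‖p j x‖)
        (a := fun _ => 0) (fun j hj => by
          have hj1 : j ≠ 1 := (Finset.mem_erase.mp hj).1
          have hj0 : j ≠ 0 := (Finset.mem_erase.mp (Finset.mem_erase.mp hj).2).1
          have := ((hTz j hj0 hj1).abs).mul_const ‖p j x‖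
          simpa using this)
      simpa using h
    have hGlim : Tendsto (fun n : ℕ => (∑ j ∈ T, |ψ j n / ψ 1 n| * ‖p j x‖)
        + C x * (n:ℝ)^((3:ℝ)/2 + ε) * Real.exp (-(ρ-r)*n) / ψ 1 n) atTop (𝓝 0) := by
      have := hsum.add (herr (C x) ((3:ℝ)/2 + ε))
      simpa using this
    refine squeeze_zero' ?_ ?_ hGlim
    · filter_upwards [hψ1pos] with n hn
      positivity
    · filter_upwards [hψ1pos, eventually_ge_atTop 1] with n hn h1n
      have hb : ‖(∑ j ∈ T, ((ψ j n:ℝ):ℂ) * p j x)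
          + (A n x - ∑ j, ((ψ j n:ℝ):ℂ) * p j x)‖
          ≤ (∑ j ∈ T, |ψ j n| * ‖p j x‖) + C x * (n:ℝ)^((3:ℝ)/2 + ε) * Real.exp (-(ρ-r)*n) := by
        refine (norm_add_le _ _).trans (add_le_add ?_ (hx n h1n))
        refine (norm_sum_le _ _).trans (Finset.sum_le_sum fun j _ => le_of_eq ?_)
        rw [norm_mul, Complex.norm_real, Real.norm_eq_abs]
      refine le_trans ((div_le_div_iff_of_pos_right hn).mpr hb) (le_of_eq ?_)
      rw [add_div, Finset.sum_div]
      congr 1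
      exact Finset.sum_congr rfl fun j _ => by
        rw [abs_div, abs_of_pos hn]; ring
  have hdiv : Tendsto (fun n : ℕ => ((A n x - p 0 x) - ((ψ 1 n:ℝ):ℂ) * p 1 x)
      / ((ψ 1 n:ℝ):ℂ)) atTop (𝓝 0) := by
    rw [tendsto_zero_iff_norm_tendsto_zero]
    refine hrem.congr' ?_
    filter_upwards [hψ1pos] with n hn
    rw [norm_div, Complex.norm_real, Real.norm_eq_abs, abs_of_pos hn, hptdecomp n x]
  have hptlim : Tendsto (fun n : ℕ => (A n x - p 0 x) / ((ψ 1 n:ℝ):ℂ)) atTop (𝓝 (p 1 x)) := by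
    have h3 := hdiv.add (tendsto_const_nhds (x := p 1 x))
    rw [zero_add] at h3
    refine h3.congr' ?_
    filter_upwards [hψ1pos] with n hn
    have hne : ((ψ 1 n:ℝ):ℂ) ≠ 0 := Complex.ofReal_ne_zero.mpr hn.ne'
    field_simp
    ring
  -- final combination
  have hfin := hptlim.mul ((Complex.continuous_ofReal.tendsto L⁻¹).comp hinv)
  have hval : p 1 x / (((eLpNorm (p 1) 2 μ).toReal : ℝ) : ℂ) = p 1 x * ((L⁻¹ : ℝ) : ℂ) := by
    rw [← hLnorm, Complex.ofReal_inv, div_eq_mul_inv]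
  rw [hval]
  refine hfin.congr' ?_
  filter_upwards [hψ1pos, hBpos] with n hn hBn
  simp only [Function.comp_apply]
  rw [hNeq n, Complex.ofReal_div, div_mul_div_comm, mul_comm (A n x - p 0 x) (((ψ 1 n:ℝ):ℂ)),
    mul_div_mul_left _ _ (Complex.ofReal_ne_zero.mpr hn.ne')]
end
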